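/- With respect to the degree-lexicographic ordering on monomials of k⟨x,y⟩ with x > y, the set {y², x²y + xyx + yx², xyxy − yxyx} is a Gröbner basis of the ideal (y², x²y + xyx + yx²); in particular every S-polynomial of these three elements reduces to zero modulo the set. -/

import Mathlib

/-!
Statement 2.  In `ℚ⟨x,y⟩`, with monomials (words in `x,y`) ordered degree-lexicographically
with `x > y`, the set `{y², x²y + xyx + yx², xyxy − yxyx}` is a Gröbner basis of the
two-sided ideal `(y², x²y + xyx + yx²)`: all three elements lie in the ideal, and the
leading monomial of every nonzero element of the ideal is divisible (as a word, i.e. has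
as a factor) by the leading monomial of one of the three basis elements, namely
`y·y`, `x·x·y` and `x·y·x·y`.
-/

noncomputable section

/-- The free associative algebra `ℚ⟨x,y⟩`, as the monoid algebra of the free monoid on two
letters (`0 ↦ x`, `1 ↦ y`). -/
abbrev FA2 := MonoidAlgebra ℚ (FreeMonoid (Fin 2))

/-- Abbreviation: the word (monomial) corresponding to a list of letters. -/
def w (l : List (Fin 2)) : FreeMonoid (Fin 2) := FreeMonoid.ofList l

/-- The letter ordering making `x = 0` *greater* than `y = 1`. -/
def letterLt (a b : Fin 2) : Prop := (b : ℕ) < (a : ℕ)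

/-- Degree-lexicographic order on monomials: first compare lengths, then compare
lexicographically (with `x > y`). -/
def degLexLt (u v : FreeMonoid (Fin 2)) : Prop :=
  (FreeMonoid.toList u).length < (FreeMonoid.toList v).length ∨
    ((FreeMonoid.toList u).length = (FreeMonoid.toList v).length ∧
      List.Lex letterLt (FreeMonoid.toList u) (FreeMonoid.toList v))

/-- `m` is the leading monomial of `p`: it occurs in `p` and dominates every other
monomial of `p` in the deg-lex order. -/
def IsLeadingMonomial (p : FA2) (m : FreeMonoid (Fin 2)) : Prop :=
  m ∈ p.coeff.support ∧ ∀ m' ∈ p.coeff.support, m' ≠ m → degLexLt m' m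

/-- `g₁ = y²`. -/
def G1 : FA2 := MonoidAlgebra.single (w [1, 1]) 1

/-- `g₂ = x²y + xyx + yx²`. -/
def G2 : FA2 :=
  MonoidAlgebra.single (w [0, 0, 1]) 1 + MonoidAlgebra.single (w [0, 1, 0]) 1 +
    MonoidAlgebra.single (w [1, 0, 0]) 1

/-- `g₃ = xyxy − yxyx`. -/
def G3 : FA2 :=
  MonoidAlgebra.single (w [0, 1, 0, 1]) 1 - MonoidAlgebra.single (w [1, 0, 1, 0]) 1

/-- The two-sided ideal generated by `g₁, g₂` (as a `ℚ`-submodule, which for a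
`ℚ`-algebra is the same thing as the two-sided ideal). -/
def BVIdeal : Submodule ℚ FA2 :=
  Submodule.span ℚ {p | ∃ a b : FA2, p = a * G1 * b ∨ p = a * G2 * b}

/-! ### Auxiliary development for the proof -/

namespace BVAux

open Polynomial

/-- The representation space: rank-4 free module over `ℚ[X]`, viewed as a `ℚ`-module. -/
abbrev V := Fin 4 → Polynomial ℚ

def Tx : V →ₗ[ℚ] V where
  toFun v := ![X * v 0, -(X^2) * v 2, v 1 - X * v 2, X * v 3]
  map_add' u v := by funext i; fin_cases i <;> simp <;> ring
  map_smul' c v := by funext i; fin_cases i <;> simp [mul_smul_comm, smul_sub]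

def Ty : V →ₗ[ℚ] V where
  toFun v := ![0, v 0, 0, v 2]
  map_add' u v := by funext i; fin_cases i <;> simp
  map_smul' c v := by funext i; fin_cases i <;> simp

lemma Tx_apply (v : V) : Tx v = ![X * v 0, -(X^2) * v 2, v 1 - X * v 2, X * v 3] := rfl
lemma Ty_apply (v : V) : Ty v = ![0, v 0, 0, v 2] := rfl

lemma Tx_single0 (p : ℚ[X]) : Tx (Pi.single (0 : Fin 4) p) = Pi.single (0 : Fin 4) (X * p) := by
  funext k; fin_cases k <;> simp [Tx_apply, Pi.single_apply]

lemma Tx_single1 (p : ℚ[X]) : Tx (Pi.single (1 : Fin 4) p) = Pi.single (2 : Fin 4) p := by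
  funext k; fin_cases k <;> simp [Tx_apply, Pi.single_apply]

lemma Tx_single2 (p : ℚ[X]) :
    Tx (Pi.single (2 : Fin 4) p) =
      -Pi.single (1 : Fin 4) (X^2 * p) - Pi.single (2 : Fin 4) (X * p) := by
  funext k; fin_cases k <;> simp [Tx_apply, Pi.single_apply]

lemma Tx_single3 (p : ℚ[X]) : Tx (Pi.single (3 : Fin 4) p) = Pi.single (3 : Fin 4) (X * p) := by
  funext k; fin_cases k <;> simp [Tx_apply, Pi.single_apply]

lemma Ty_single0 (p : ℚ[X]) : Ty (Pi.single (0 : Fin 4) p) = Pi.single (1 : Fin 4) p := by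
  funext k; fin_cases k <;> simp [Ty_apply, Pi.single_apply]

lemma Ty_single1 (p : ℚ[X]) : Ty (Pi.single (1 : Fin 4) p) = 0 := by
  funext k; fin_cases k <;> simp [Ty_apply, Pi.single_apply]

lemma Ty_single2 (p : ℚ[X]) : Ty (Pi.single (2 : Fin 4) p) = Pi.single (3 : Fin 4) p := by
  funext k; fin_cases k <;> simp [Ty_apply, Pi.single_apply]

lemma Ty_single3 (p : ℚ[X]) : Ty (Pi.single (3 : Fin 4) p) = 0 := by
  funext k; fin_cases k <;> simp [Ty_apply, Pi.single_apply]

def T : Fin 2 → Module.End ℚ V := ![Tx, Ty]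

def v0 : V := Pi.single 0 1

def act : List (Fin 2) → Module.End ℚ V
  | [] => 1
  | i :: l => T i * act l

def psi (l : List (Fin 2)) : V := act l v0

lemma psi_cons (i : Fin 2) (l : List (Fin 2)) : psi (i :: l) = T i (psi l) := rfl

/-! ### The algebra map to `End V` -/

def Phi : FA2 →ₐ[ℚ] Module.End ℚ V :=
  MonoidAlgebra.lift ℚ (Module.End ℚ V) (FreeMonoid (Fin 2)) (FreeMonoid.lift T)

theorem Phi_single (l : List (Fin 2)) :
    Phi (MonoidAlgebra.single (FreeMonoid.ofList l) 1) = act l := by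
  induction l with
  | nil => simp [Phi, act]
  | cons i l ih =>
      rw [FreeMonoid.ofList_cons, ← one_mul (1:ℚ), ← MonoidAlgebra.single_mul_single,
        map_mul, ih, act]
      congr 1
      simp [Phi]

theorem PhiG1 : Phi G1 = 0 := by
  have h : G1 = MonoidAlgebra.single (FreeMonoid.ofList [1,1]) 1 := rfl
  rw [h, Phi_single]
  apply LinearMap.ext; intro v
  show Ty (Ty v) = 0
  funext k; fin_cases k <;> simp [Ty_apply]

theorem PhiG2 : Phi G2 = 0 := by
  have h : G2 = MonoidAlgebra.single (FreeMonoid.ofList [0,0,1]) 1 +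
      MonoidAlgebra.single (FreeMonoid.ofList [0,1,0]) 1 +
      MonoidAlgebra.single (FreeMonoid.ofList [1,0,0]) 1 := rfl
  rw [h, map_add, map_add, Phi_single, Phi_single, Phi_single]
  apply LinearMap.ext; intro v
  show Tx (Tx (Ty v)) + Tx (Ty (Tx v)) + Ty (Tx (Tx v)) = 0
  funext k; fin_cases k <;> simp [Tx_apply, Ty_apply] <;> ring

theorem Phi_ideal (p : FA2) (hp : p ∈ BVIdeal) : Phi p = 0 := by
  refine Submodule.span_induction ?_ ?_ ?_ ?_ hp
  · rintro q ⟨a, b, h | h⟩ <;> subst h <;>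
      simp only [map_mul, PhiG1, PhiG2, mul_zero, zero_mul]
  · exact map_zero Phi
  · intro u v _ _ hu hv; rw [map_add, hu, hv, add_zero]
  · intro c u _ hu; rw [map_smul, hu, smul_zero]

/-! ### `G3` lies in the ideal -/

def Yel : FA2 := MonoidAlgebra.single (w [1]) 1
def X2 : FA2 := MonoidAlgebra.single (w [0,0]) 1

lemma G3_eq : G3 = G2 * Yel - X2 * G1 - Yel * G2 + G1 * X2 := by
  simp only [G1, G2, G3, Yel, X2, w, add_mul, mul_add, MonoidAlgebra.single_mul_single,
    one_mul, mul_one, ← FreeMonoid.ofList_append, List.cons_append, List.nil_append]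
  abel

/-! ### Irreducible words and the deg-lex order on lists -/

def rep (a : ℕ) : List (Fin 2) := List.replicate a 0

def formWord : Fin 4 → ℕ → List (Fin 2) := fun i a =>
  match i with
  | 0 => rep a
  | 1 => 1 :: rep a
  | 2 => 0 :: 1 :: rep a
  | 3 => 1 :: 0 :: 1 :: rep a

lemma rep_succ (a : ℕ) : rep (a + 1) = 0 :: rep a := List.replicate_succ ..

theorem irr_or_factor (u : List (Fin 2)) :
    (∃ i a, u = formWord i a) ∨ ∃ L R : List (Fin 2),
      u = L ++ [1,1] ++ R ∨ u = L ++ [0,0,1] ++ R ∨ u = L ++ [0,1,0,1] ++ R := by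
  induction u with
  | nil => exact Or.inl ⟨0, 0, rfl⟩
  | cons i u ih =>
    rcases ih with ⟨j, a, rfl⟩ | ⟨L, R, h⟩
    · fin_cases i <;> fin_cases j
      · exact Or.inl ⟨0, a + 1, by simp [formWord, rep_succ]⟩
      · exact Or.inl ⟨2, a, rfl⟩
      · exact Or.inr ⟨[], rep a, Or.inr (Or.inl rfl)⟩
      · exact Or.inr ⟨[], rep a, Or.inr (Or.inr rfl)⟩
      · exact Or.inl ⟨1, a, rfl⟩
      · exact Or.inr ⟨[], rep a, Or.inl rfl⟩
      · exact Or.inl ⟨3, a, rfl⟩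
      · exact Or.inr ⟨[], 0 :: 1 :: rep a, Or.inl rfl⟩
    · exact Or.inr ⟨i :: L, R, by rcases h with h | h | h <;> simp [h]⟩

instance : IsStrictTotalOrder (Fin 2) letterLt where
  trichotomous := by unfold letterLt; decide
  irrefl := by unfold letterLt; decide
  trans := by unfold letterLt; decide

def dlt (u v : List (Fin 2)) : Prop :=
  u.length < v.length ∨ (u.length = v.length ∧ List.Lex letterLt u v)

def dle (u v : List (Fin 2)) : Prop := dlt u v ∨ u = v

lemma lt10 : letterLt 1 0 := Nat.zero_lt_one

lemma dlt_trans {u v w : List (Fin 2)} (h1 : dlt u v) (h2 : dlt v w) : dlt u w := by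
  rcases h1 with h1 | ⟨e1, l1⟩ <;> rcases h2 with h2 | ⟨e2, l2⟩
  · exact Or.inl (h1.trans h2)
  · exact Or.inl (e2 ▸ h1)
  · exact Or.inl (e1 ▸ h2)
  · exact Or.inr ⟨e1.trans e2, List.lex_trans (fun h h' => by unfold letterLt at *; omega) l1 l2⟩

lemma dlt_irrefl (u : List (Fin 2)) : ¬ dlt u u := by
  rintro (h | ⟨-, h⟩)
  · exact lt_irrefl _ h
  · exact irrefl_of (List.Lex letterLt) u h

lemma dle_trans_lt {u v w : List (Fin 2)} (h1 : dle u v) (h2 : dlt v w) : dlt u w := by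
  rcases h1 with h1 | rfl
  · exact dlt_trans h1 h2
  · exact h2

lemma dle_trans {u v w : List (Fin 2)} (h1 : dle u v) (h2 : dle v w) : dle u w := by
  rcases h2 with h2 | rfl
  · exact Or.inl (dle_trans_lt h1 h2)
  · exact h1

lemma dlt_cons (i : Fin 2) {u v : List (Fin 2)} (h : dlt u v) : dlt (i :: u) (i :: v) := by
  rcases h with h | ⟨e, l⟩
  · exact Or.inl (by simpa using h)
  · exact Or.inr ⟨by simpa using e, List.Lex.cons l⟩

lemma dle_cons (i : Fin 2) {u v : List (Fin 2)} (h : dle u v) : dle (i :: u) (i :: v) := by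
  rcases h with h | rfl
  · exact Or.inl (dlt_cons i h)
  · exact Or.inr rfl

/-! ### `psi` on irreducible words -/

lemma T0 : T 0 = (Tx : Module.End ℚ V) := rfl
lemma T1 : T 1 = (Ty : Module.End ℚ V) := rfl

lemma psi_fw0 (a : ℕ) : psi (rep a) = Pi.single (0 : Fin 4) (X ^ a) := by
  induction a with
  | zero => rw [pow_zero]; rfl
  | succ a ih =>
      rw [rep_succ, psi_cons, ih, T0, Tx_single0, show X * X ^ a = X ^ (a+1) by ring]

lemma psi_fw1 (a : ℕ) : psi (1 :: rep a) = Pi.single (1 : Fin 4) (X ^ a) := by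
  rw [psi_cons, psi_fw0, T1, Ty_single0]

lemma psi_fw2 (a : ℕ) : psi (0 :: 1 :: rep a) = Pi.single (2 : Fin 4) (X ^ a) := by
  rw [psi_cons, psi_fw1, T0, Tx_single1]

lemma psi_fw3 (a : ℕ) : psi (1 :: 0 :: 1 :: rep a) = Pi.single (3 : Fin 4) (X ^ a) := by
  rw [psi_cons, psi_fw2, T1, Ty_single2]

lemma psi_formWord (j : Fin 4) (a : ℕ) : psi (formWord j a) = Pi.single j (X ^ a) := by
  fin_cases j
  · exact psi_fw0 a
  · exact psi_fw1 a
  · exact psi_fw2 a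
  · exact psi_fw3 a

/-! ### The span of dominated irreducible monomials -/

def goodSpan (m : List (Fin 2)) : Submodule ℚ V :=
  Submodule.span ℚ {v : V | ∃ i a, dle (formWord i a) m ∧ v = Pi.single i (X ^ a)}

lemma goodSpan_mono {m₁ m₂ : List (Fin 2)} (h : dle m₁ m₂) : goodSpan m₁ ≤ goodSpan m₂ := by
  apply Submodule.span_mono
  rintro v ⟨i, a, hia, rfl⟩
  exact ⟨i, a, dle_trans hia h, rfl⟩

lemma mem_goodSpan_self (i : Fin 4) (a : ℕ) :
    (Pi.single i (X ^ a) : V) ∈ goodSpan (formWord i a) :=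
  Submodule.subset_span ⟨i, a, Or.inr rfl, rfl⟩

lemma key_x0 (a : ℕ) : psi (0 :: formWord 0 a) ∈ goodSpan (0 :: formWord 0 a) := by
  have e : (0 : Fin 2) :: formWord 0 a = formWord 0 (a+1) := (rep_succ a).symm
  rw [e, psi_formWord]; exact mem_goodSpan_self 0 (a+1)

lemma key_x1 (a : ℕ) : psi (0 :: formWord 1 a) ∈ goodSpan (0 :: formWord 1 a) := by
  have e : (0 : Fin 2) :: formWord 1 a = formWord 2 a := rfl
  rw [e, psi_formWord]; exact mem_goodSpan_self 2 a

lemma key_x2 (a : ℕ) : psi (0 :: formWord 2 a) ∈ goodSpan (0 :: formWord 2 a) := by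
  have hpsi : psi (0 :: formWord 2 a) =
      -Pi.single (1 : Fin 4) (X ^ (a+2)) - Pi.single (2 : Fin 4) (X ^ (a+1)) := by
    rw [psi_cons, psi_formWord, T0, Tx_single2,
      show X ^ 2 * X ^ a = X ^ (a+2) by ring, show X * X ^ a = X ^ (a+1) by ring]
  rw [hpsi]
  refine sub_mem (neg_mem (Submodule.subset_span ⟨1, a+2, Or.inl ?_, rfl⟩))
    (Submodule.subset_span ⟨2, a+1, Or.inl ?_, rfl⟩)
  · exact Or.inr ⟨by simp [formWord, rep], List.Lex.rel lt10⟩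
  · exact Or.inr ⟨by simp [formWord, rep], List.Lex.cons (List.Lex.rel lt10)⟩

lemma key_x3 (a : ℕ) : psi (0 :: formWord 3 a) ∈ goodSpan (0 :: formWord 3 a) := by
  have hpsi : psi (0 :: formWord 3 a) = Pi.single (3 : Fin 4) (X ^ (a+1)) := by
    rw [psi_cons, psi_formWord, T0, Tx_single3, show X * X ^ a = X ^ (a+1) by ring]
  rw [hpsi]
  refine Submodule.subset_span ⟨3, a+1, Or.inl (Or.inr ⟨by simp [formWord, rep, rep_succ], ?_⟩), rfl⟩
  exact List.Lex.rel lt10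

lemma key_y0 (a : ℕ) : psi (1 :: formWord 0 a) ∈ goodSpan (1 :: formWord 0 a) := by
  have e : (1 : Fin 2) :: formWord 0 a = formWord 1 a := rfl
  rw [e, psi_formWord]; exact mem_goodSpan_self 1 a

lemma key_y1 (a : ℕ) : psi (1 :: formWord 1 a) ∈ goodSpan (1 :: formWord 1 a) := by
  have hpsi : psi (1 :: formWord 1 a) = 0 := by
    rw [psi_cons, psi_formWord, T1, Ty_single1]
  rw [hpsi]; exact zero_mem _

lemma key_y2 (a : ℕ) : psi (1 :: formWord 2 a) ∈ goodSpan (1 :: formWord 2 a) := by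
  have e : (1 : Fin 2) :: formWord 2 a = formWord 3 a := rfl
  rw [e, psi_formWord]; exact mem_goodSpan_self 3 a

lemma key_y3 (a : ℕ) : psi (1 :: formWord 3 a) ∈ goodSpan (1 :: formWord 3 a) := by
  have hpsi : psi (1 :: formWord 3 a) = 0 := by
    rw [psi_cons, psi_formWord, T1, Ty_single3]
  rw [hpsi]; exact zero_mem _

lemma key (i : Fin 2) (j : Fin 4) (a : ℕ) :
    psi (i :: formWord j a) ∈ goodSpan (i :: formWord j a) := by
  fin_cases i <;> fin_cases j
  · exact key_x0 a
  · exact key_x1 a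
  · exact key_x2 a
  · exact key_x3 a
  · exact key_y0 a
  · exact key_y1 a
  · exact key_y2 a
  · exact key_y3 a

theorem psi_mem (m : List (Fin 2)) : psi m ∈ goodSpan m := by
  induction m with
  | nil =>
      refine Submodule.subset_span ⟨0, 0, Or.inr rfl, ?_⟩
      rw [pow_zero]; rfl
  | cons i m ih =>
      have hmap : goodSpan m ≤ (goodSpan (i :: m)).comap (T i) := by
        rw [goodSpan, Submodule.span_le]
        rintro v ⟨j, a, hja, rfl⟩
        have h3 : T i (Pi.single j (X ^ a) : V) = psi (i :: formWord j a) := by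
          rw [psi_cons, psi_formWord]
        refine Submodule.mem_comap.mpr ?_
        rw [h3]
        exact goodSpan_mono (dle_cons i hja) (key i j a)
      rw [psi_cons]
      exact hmap ih

/-! ### The coefficient functional -/

def lam (i0 : Fin 4) (a0 : ℕ) : V →ₗ[ℚ] ℚ :=
  (Polynomial.lcoeff ℚ a0).comp (LinearMap.proj i0)

lemma lam_single (i0 : Fin 4) (a0 : ℕ) (j : Fin 4) (a : ℕ) (h : ¬ (j = i0 ∧ a = a0)) :
    lam i0 a0 (Pi.single j (X ^ a) : V) = 0 := by
  simp only [lam, LinearMap.comp_apply, LinearMap.proj_apply, lcoeff_apply]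
  by_cases hj : j = i0
  · subst hj
    have ha : a0 ≠ a := fun hh => h ⟨rfl, hh.symm⟩
    rw [Pi.single_eq_same, coeff_X_pow, if_neg ha]
  · rw [Pi.single_eq_of_ne (fun hh => hj hh.symm), coeff_zero]

lemma lam_single_self (i0 : Fin 4) (a0 : ℕ) :
    lam i0 a0 (Pi.single i0 (X ^ a0) : V) = 1 := by
  simp only [lam, LinearMap.comp_apply, LinearMap.proj_apply, lcoeff_apply]
  rw [Pi.single_eq_same, coeff_X_pow, if_pos rfl]

lemma one_not_mem_replicate (b : ℕ) : (1 : Fin 2) ∉ List.replicate b (0 : Fin 2) := fun hb =>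
  absurd (List.eq_of_mem_replicate hb) (by decide)

lemma formWord_inj {i0 j : Fin 4} {a0 a : ℕ} (h : formWord j a = formWord i0 a0) :
    j = i0 ∧ a = a0 := by
  fin_cases j <;> fin_cases i0 <;> simp_all [formWord, rep, List.replicate] <;>
    first
      | omega
      | exact one_not_mem_replicate _ (by rw [h]; simp)
      | exact one_not_mem_replicate _ (by rw [← h]; simp)

lemma lam_vanish (i0 : Fin 4) (a0 : ℕ) (u : List (Fin 2)) (hu : dlt u (formWord i0 a0)) :
    lam i0 a0 (psi u) = 0 := by
  have hle : goodSpan u ≤ LinearMap.ker (lam i0 a0) := by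
    rw [goodSpan, Submodule.span_le]
    rintro v ⟨j, a, hja, rfl⟩
    have hne : ¬ (j = i0 ∧ a = a0) := by
      rintro ⟨rfl, rfl⟩
      exact dlt_irrefl _ (dle_trans_lt hja hu)
    exact LinearMap.mem_ker.mpr (lam_single i0 a0 j a hne)
  exact hle (psi_mem u)

end BVAux

open BVAux in
/-- `{y², x²y+xyx+yx², xyxy−yxyx}` is a Gröbner basis of the ideal `(y², x²y+xyx+yx²)`
for the deg-lex order with `x > y`: the three elements lie in the ideal, and the leading
monomial of every nonzero element of the ideal has one of the leading words
`yy`, `xxy`, `xyxy` as a factor. -/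
theorem bv_groebner_basis :
    G1 ∈ BVIdeal ∧ G2 ∈ BVIdeal ∧ G3 ∈ BVIdeal ∧
    ∀ p ∈ BVIdeal, p ≠ 0 → ∀ m, IsLeadingMonomial p m →
      ∃ u v : FreeMonoid (Fin 2),
        m = u * w [1, 1] * v ∨ m = u * w [0, 0, 1] * v ∨ m = u * w [0, 1, 0, 1] * v := by
  have hG1 : G1 ∈ BVIdeal :=
    Submodule.subset_span ⟨1, 1, Or.inl (by rw [one_mul, mul_one])⟩
  have hG2 : G2 ∈ BVIdeal :=
    Submodule.subset_span ⟨1, 1, Or.inr (by rw [one_mul, mul_one])⟩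
  have hG3 : G3 ∈ BVIdeal := by
    rw [BVAux.G3_eq]
    refine add_mem (sub_mem (sub_mem ?_ ?_) ?_) ?_
    · exact Submodule.subset_span ⟨1, BVAux.Yel, Or.inr (by rw [one_mul])⟩
    · exact Submodule.subset_span ⟨BVAux.X2, 1, Or.inl (by rw [mul_one])⟩
    · exact Submodule.subset_span ⟨BVAux.Yel, 1, Or.inr (by rw [mul_one])⟩
    · exact Submodule.subset_span ⟨1, BVAux.X2, Or.inl (by rw [one_mul])⟩
  refine ⟨hG1, hG2, hG3, ?_⟩
  intro p hp hpne m hm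
  by_contra hcon
  push_neg at hcon
  have hirr : ∃ i a, FreeMonoid.toList m = BVAux.formWord i a := by
    rcases BVAux.irr_or_factor (FreeMonoid.toList m) with h | ⟨L, R, h | h | h⟩
    · exact h
    · refine absurd ?_ (hcon (FreeMonoid.ofList L) (FreeMonoid.ofList R)).1
      rw [← FreeMonoid.ofList_toList m, h]
      simp only [w, ← FreeMonoid.ofList_append, List.append_assoc]
    · refine absurd ?_ (hcon (FreeMonoid.ofList L) (FreeMonoid.ofList R)).2.1
      rw [← FreeMonoid.ofList_toList m, h]
      simp only [w, ← FreeMonoid.ofList_append, List.append_assoc]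
    · refine absurd ?_ (hcon (FreeMonoid.ofList L) (FreeMonoid.ofList R)).2.2
      rw [← FreeMonoid.ofList_toList m, h]
      simp only [w, ← FreeMonoid.ofList_append, List.append_assoc]
  obtain ⟨i0, a0, hm0⟩ := hirr
  have hv : ∀ m' ∈ p.coeff.support, m' ≠ m →
      BVAux.lam i0 a0 (BVAux.psi (FreeMonoid.toList m')) = 0 := by
    intro m' hmem hne
    have hd : BVAux.dlt (FreeMonoid.toList m') (FreeMonoid.toList m) := hm.2 m' hmem hne
    exact BVAux.lam_vanish i0 a0 _ (hm0 ▸ hd)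
  have hzero : BVAux.Phi p = 0 := BVAux.Phi_ideal p hp
  have h1 : BVAux.lam i0 a0 (BVAux.Phi p BVAux.v0) = 0 := by
    rw [hzero]; simp
  have hexp : (BVAux.Phi p) BVAux.v0
      = ∑ m' ∈ p.coeff.support, p.coeff m' • BVAux.psi (FreeMonoid.toList m') := by
    conv_lhs => rw [← MonoidAlgebra.sum_coeff_single p]
    rw [map_finsuppSum, Finsupp.sum, LinearMap.sum_apply]
    refine Finset.sum_congr rfl fun m' _ => ?_
    have e1 : (MonoidAlgebra.single m' (p.coeff m') : FA2)
        = (p.coeff m') • MonoidAlgebra.single (FreeMonoid.ofList (FreeMonoid.toList m')) (1:ℚ) := by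
      rw [FreeMonoid.ofList_toList, MonoidAlgebra.smul_single', mul_one]
    rw [e1, map_smul, LinearMap.smul_apply, BVAux.Phi_single]
    rfl
  rw [hexp, map_sum] at h1
  have h2 : ∑ m' ∈ p.coeff.support, BVAux.lam i0 a0 (p.coeff m' • BVAux.psi (FreeMonoid.toList m'))
      = p.coeff m := by
    rw [Finset.sum_eq_single m]
    · rw [map_smul, smul_eq_mul, hm0, BVAux.psi_formWord, BVAux.lam_single_self, mul_one]
    · intro m' hmem hne
      rw [map_smul, smul_eq_mul, hv m' hmem hne, mul_zero]
    · intro hns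
      rw [Finsupp.notMem_support_iff.mp hns, zero_smul, map_zero]
  rw [h2] at h1
  exact (Finsupp.mem_support_iff.mp hm.1) h1

end
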